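/- For the dimensionally split scheme for the 2D acoustic equations with diffusion matrices D_x = [[a₁,0,a₂],[0,0,0],[a₃,0,a₄]] and D_y = [[0,0,0],[0,a₁,a₂],[0,a₃,a₄]], the determinant of the evolution matrix ℰ(k) vanishes for all (t_x, t_y) on the unit circle if and only if a₁ = 0. Here ℰ is the 3×3 matrix whose entries are: ℰ₁₁ = i·(-a₁(t_x-2+1/t_x))/(2Δx), ℰ₁₂ = 0, ℰ₁₃ = i·(-a₂(t_x-2+1/t_x)/(2Δx) + (t_x-1/t_x)/(2Δx ε²)), ℰ₂₁ = 0, ℰ₂₂ = i·(-a₁(t_y-2+1/t_y))/(2Δy), ℰ₂₃ = i·(-a₂(t_y-2+1/t_y)/(2Δy) + (t_y-1/t_y)/(2Δy ε²)), ℰ₃₁ = i·(-a₃(t_x-2+1/t_x)/(2Δx) + c²(t_x-1/t_x)/(2Δx)), ℰ₃₂ = i·(-a₃(t_y-2+1/t_y)/(2Δy) + c²(t_y-1/t_y)/(2Δy)), ℰ₃₃ = i·(-a₄(t_x-2+1/t_x)/(2Δx) - a₄(t_y-2+1/t_y)/(2Δy)). -/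

import Mathlib

open Matrix Complex

set_option maxHeartbeats 2000000 in
/-- The determinant of the evolution matrix of the dimensionally split acoustic
scheme vanishes for all `t_x, t_y` on the unit circle iff `a₁ = 0`. -/
theorem dimsplit_det_vanishes_iff (a₁ a₂ a₃ a₄ c ε Δx Δy : ℝ)
    (hc : 0 < c) (hε : 0 < ε) (hΔx : 0 < Δx) (hΔy : 0 < Δy)
    (E : ℂ → ℂ → Matrix (Fin 3) (Fin 3) ℂ)
    (hE : ∀ tx ty : ℂ, E tx ty =
      !![I * (-(a₁:ℂ) * (tx - 2 + 1/tx)) / (2*Δx), 0,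
           I * (-(a₂:ℂ) * (tx - 2 + 1/tx) / (2*Δx) + (tx - 1/tx) / (2*Δx*(ε:ℂ)^2));
         0, I * (-(a₁:ℂ) * (ty - 2 + 1/ty)) / (2*Δy),
           I * (-(a₂:ℂ) * (ty - 2 + 1/ty) / (2*Δy) + (ty - 1/ty) / (2*Δy*(ε:ℂ)^2));
         I * (-(a₃:ℂ) * (tx - 2 + 1/tx) / (2*Δx) + (c:ℂ)^2 * (tx - 1/tx) / (2*Δx)),
         I * (-(a₃:ℂ) * (ty - 2 + 1/ty) / (2*Δy) + (c:ℂ)^2 * (ty - 1/ty) / (2*Δy)),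
         I * (-(a₄:ℂ) * (tx - 2 + 1/tx) / (2*Δx) - (a₄:ℂ) * (ty - 2 + 1/ty) / (2*Δy))]) :
    (∀ tx ty : ℂ, ‖tx‖ = 1 → ‖ty‖ = 1 →
      (E tx ty).det = 0) ↔ a₁ = 0 := by
  constructor
  · intro h
    have hx : (Δx:ℂ) ≠ 0 := by exact_mod_cast hΔx.ne'
    have hy : (Δy:ℂ) ≠ 0 := by exact_mod_cast hΔy.ne'
    have he : (ε:ℂ) ≠ 0 := by exact_mod_cast hε.ne'
    have h1 := h (-1) (-1) (by simp) (by simp)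
    have h2 := h (-1) I (by simp) (by simp)
    rw [hE, Matrix.det_fin_three] at h1 h2
    simp only [Matrix.cons_val', Matrix.cons_val_zero, Matrix.cons_val_one, Matrix.head_cons,
      Matrix.empty_val', Matrix.cons_val_fin_one, Matrix.head_fin_const, Matrix.of_apply,
      Matrix.cons_val_two, Matrix.tail_cons, one_div, Complex.inv_I] at h1 h2
    norm_num at h1 h2
    rw [sub_eq_zero] at h1
    rw [sub_eq_zero] at h2
    field_simp [hx, hy, he] at h1 h2
    have hI2 : (I:ℂ)^2 = -1 := Complex.I_sq
    have hI3 : (I:ℂ)^3 = -I := by rw [pow_succ, hI2]; ring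
    have hI4 : (I:ℂ)^4 = 1 := by rw [pow_succ, hI3]; simp [Complex.I_mul_I]
    have hI5 : (I:ℂ)^5 = I := by rw [pow_succ, hI4, one_mul]
    ring_nf at h1 h2
    simp only [hI5, hI4, hI3, hI2] at h1 h2
    -- extract real equations
    have e1c : ((8192*Δx^3*Δy^3*(a₁*(a₂*a₃ - a₁*a₄)*(Δx+Δy)) : ℝ) : ℂ) * I = 0 := by
      push_cast
      linear_combination (-8192*Δx^3*Δy^3*I) * h1
    have e1r : 8192*Δx^3*Δy^3*(a₁*(a₂*a₃ - a₁*a₄)*(Δx+Δy)) = 0 := by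
      rcases mul_eq_zero.mp e1c with h' | h'
      · exact_mod_cast h'
      · exact absurd h' I_ne_zero
    have e2c : ((-8192*Δx^4*Δy^5*(a₁*a₃ + a₁*a₂*c^2*ε^2) : ℝ) : ℂ) +
        ((8192*Δx^3*Δy^5*(a₁*((a₂*a₃ - a₁*a₄)*ε^2*(Δx+2*Δy) - c^2*Δx)) : ℝ) : ℂ) * I = 0 := by
      push_cast
      linear_combination (-2048*Δx^3*Δy^5*I) * h2 + (-8192*Δx^4*Δy^5*a₁*(a₃+a₂*c^2*ε^2)) * hI2
    have e2r : 8192*Δx^3*Δy^5*(a₁*((a₂*a₃ - a₁*a₄)*ε^2*(Δx+2*Δy) - c^2*Δx)) = 0 := by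
      have := congrArg Complex.im e2c
      simpa [← Complex.ofReal_pow] using this
    -- finish
    by_contra ha
    have hK : a₂*a₃ - a₁*a₄ = 0 := by
      have h' : a₁*(a₂*a₃ - a₁*a₄)*(Δx+Δy) = 0 := by
        have h8 : (8192*Δx^3*Δy^3 : ℝ) ≠ 0 := by positivity
        have := mul_eq_zero.mp (by linarith [e1r] : (8192*Δx^3*Δy^3) * (a₁*(a₂*a₃ - a₁*a₄)*(Δx+Δy)) = 0)
        tauto
      have hxy : Δx + Δy ≠ 0 := by positivity
      rcases mul_eq_zero.mp h' with h'' | h''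
      · rcases mul_eq_zero.mp h'' with h3 | h3
        · exact absurd h3 ha
        · exact h3
      · exact absurd h'' hxy
    have h' : a₁*((a₂*a₃ - a₁*a₄)*ε^2*(Δx+2*Δy) - c^2*Δx) = 0 := by
      have h8 : (8192*Δx^3*Δy^5 : ℝ) ≠ 0 := by positivity
      have := mul_eq_zero.mp (by linarith [e2r] : (8192*Δx^3*Δy^5) * (a₁*((a₂*a₃ - a₁*a₄)*ε^2*(Δx+2*Δy) - c^2*Δx)) = 0)
      tauto
    rw [hK] at h'
    have hcx : (0:ℝ)*ε^2*(Δx+2*Δy) - c^2*Δx ≠ 0 := by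
      have : c^2*Δx > 0 := by positivity
      nlinarith
    rcases mul_eq_zero.mp h' with h'' | h''
    · exact ha h''
    · exact hcx h''
  · intro ha tx ty _ _
    subst ha
    rw [hE, Matrix.det_fin_three]
    simp
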